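/- Let K/F be a finite Galois extension whose Galois group is cyclic, and let x, y ∈ K satisfy K = F[x, y]. Let a and b be the degrees of x and y over F, let d = gcd(a, b), m = a/d, n = b/d, and assume that every prime factor of d divides mn. Then K = F[αx + βy] for all nonzero α, β ∈ F. In particular this holds whenever d divides mn. -/

import Mathlib

open Subgroup in
lemma aux_cyclic_mem {G : Type*} [Group G] [Fintype G] [IsCyclic G]
    {H : Subgroup G} {σ : G} (h : orderOf σ ∣ Nat.card H) : σ ∈ H := by
  classical
  obtain ⟨g, hg⟩ := IsCyclic.exists_generator (α := H)
  have hZ : Subgroup.zpowers (g : G) = H := by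
    apply le_antisymm
    · exact (Subgroup.zpowers_le).mpr g.2
    · intro z hz
      obtain ⟨i, hi⟩ := hg ⟨z, hz⟩
      exact ⟨i, congrArg Subtype.val hi⟩
  have hk : orderOf (g : G) = Nat.card H := by
    rw [← Nat.card_zpowers, hZ]
  set k := Nat.card H with hkdef
  have hk0 : 0 < k := Nat.card_pos
  have hσk : σ ^ k = 1 := orderOf_dvd_iff_pow_eq_one.mp h
  set S : Finset G := Finset.univ.filter (fun a : G => a ^ k = 1) with hS
  set T : Finset G := (Subgroup.zpowers (g : G) : Set G).toFinset with hT
  have hTS : T ⊆ S := by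
    intro z hz
    rw [hT, Set.mem_toFinset] at hz
    have : orderOf z ∣ k := hk ▸ orderOf_dvd_of_mem_zpowers hz
    simp [hS, orderOf_dvd_iff_pow_eq_one.mp this]
  have hTcard : T.card = k := by
    rw [hT, Set.toFinset_card]
    rw [← hk]
    exact Fintype.card_zpowers
  have hScard : S.card ≤ k := by
    simpa [hS, Nat.card_eq_fintype_card] using
      IsCyclic.card_pow_eq_one_le (α := G) hk0
  have hTeq : T = S := Finset.eq_of_subset_of_card_le hTS (hTcard ▸ hScard)
  have hσS : σ ∈ S := by simp [hS, hσk]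
  rw [← hTeq, hT, Set.mem_toFinset] at hσS
  exact hZ ▸ hσS

lemma aux_fixes_adjoin {F K : Type*} [Field F] [Field K] [Algebra F K]
    (σ : K ≃ₐ[F] K) (S : Set K) (h : ∀ s ∈ S, σ s = s) :
    σ ∈ (IntermediateField.adjoin F S).fixingSubgroup := by
  have hle : IntermediateField.adjoin F S ≤
      IntermediateField.fixedField (Subgroup.zpowers σ) := by
    rw [IntermediateField.adjoin_le_iff]
    intro s hs
    intro g
    obtain ⟨g, hgmem⟩ := g
    obtain ⟨i, rfl⟩ := hgmem
    show (σ ^ i) • s = s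
    have hnat : ∀ n : ℕ, (σ ^ n) s = s := by
      intro n
      induction n with
      | zero => simp
      | succ n ih => rw [pow_succ, AlgEquiv.mul_apply, h s hs, ih]
    rcases i with n | n
    · simpa [AlgEquiv.smul_def] using hnat n
    · rw [zpow_negSucc, AlgEquiv.smul_def]
      have := hnat (n + 1)
      nth_rewrite 1 [← this]
      exact (σ ^ (n + 1)).symm_apply_apply s
  exact (IntermediateField.le_iff_le _ _).mp hle (Subgroup.mem_zpowers σ)

/-- **Theorem (t), cyclic case.** Let `K/F` be a finite Galois extension with cyclic
Galois group, and let `x, y ∈ K` satisfy `K = F[x, y]`.  Let `a, b` be the degrees of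
`x, y` over `F`, `d = gcd(a, b)`, `m = a/d`, `n = b/d`, and assume every prime factor
of `d` divides `mn`.  Then `K = F[αx + βy]` for all nonzero `α, β ∈ F`. -/
theorem stmt5 (F K : Type*) [Field F] [Field K] [Algebra F K]
    [FiniteDimensional F K] [IsGalois F K]
    (hcyc : IsCyclic (K ≃ₐ[F] K))
    (x y : K) (hK : IntermediateField.adjoin F {x, y} = ⊤)
    (a b d m n : ℕ)
    (ha : Module.finrank F (IntermediateField.adjoin F {x}) = a)
    (hb : Module.finrank F (IntermediateField.adjoin F {y}) = b)
    (hd : d = Nat.gcd a b) (hm : a = m * d) (hn : b = n * d)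
    (hp : ∀ p : ℕ, p.Prime → p ∣ d → p ∣ m * n) :
    ∀ α β : F, α ≠ 0 → β ≠ 0 →
      IntermediateField.adjoin F {α • x + β • y} = ⊤ := by
  classical
  haveI := hcyc
  intro α β hα hβ
  by_contra hne
  set z := α • x + β • y with hzdef
  set E := IntermediateField.adjoin F {z} with hEdef
  -- the fixing subgroup of E is nontrivial
  have hfixne : E.fixingSubgroup ≠ ⊥ := by
    intro hbot
    apply hne
    have h1 := IsGalois.fixedField_fixingSubgroup E
    rw [hbot] at h1
    rw [← h1]
    exact le_antisymm le_top ((IntermediateField.le_iff_le ⊥ ⊤).mpr bot_le)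
  -- find an element of prime order p in the fixing subgroup
  have hcard1 : 1 < Nat.card (E.fixingSubgroup) := by
    rcases Nat.lt_or_ge 1 (Nat.card E.fixingSubgroup) with h | h
    · exact h
    · exfalso; apply hfixne
      have := Nat.card_pos (α := E.fixingSubgroup)
      have hc1 : Nat.card E.fixingSubgroup = 1 := le_antisymm h this
      exact Subgroup.eq_bot_of_card_eq _ hc1
  set p := (Nat.card (E.fixingSubgroup)).minFac with hpdef
  have pp : p.Prime := Nat.minFac_prime (by omega)
  have hpdvd : p ∣ Nat.card (E.fixingSubgroup) := Nat.minFac_dvd _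
  haveI : Fact p.Prime := ⟨pp⟩
  obtain ⟨σ', hσ'⟩ := exists_prime_orderOf_dvd_card (G := E.fixingSubgroup) p
    (by rwa [← Nat.card_eq_fintype_card])
  set σ : K ≃ₐ[F] K := (σ' : K ≃ₐ[F] K) with hσdef
  have hord : orderOf σ = p := by rw [hσdef, Subgroup.orderOf_coe, hσ']
  have hσmem : σ ∈ E.fixingSubgroup := σ'.2
  have hσ1 : σ ≠ 1 := by
    intro h1
    rw [h1, orderOf_one] at hord
    exact pp.one_lt.ne hord
  -- σ fixes z
  have hz : σ z = z :=
    (IntermediateField.mem_fixingSubgroup_iff E σ).mp hσmem z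
      (IntermediateField.mem_adjoin_simple_self F z)
  have heq : α • σ x + β • σ y = α • x + β • y := by
    rw [← map_smul, ← map_smul, ← map_add]; exact hz
  have hkey : σ x = x ↔ σ y = y := by
    constructor
    · intro hx
      rw [hx] at heq
      exact smul_right_injective K hβ (add_left_cancel heq)
    · intro hy
      rw [hy] at heq
      exact smul_right_injective K hα (add_right_cancel heq)
  -- σ cannot fix both x and y
  have hxne : σ x ≠ x := by
    intro hx
    have hy := hkey.mp hx
    have hmem : σ ∈ (IntermediateField.adjoin F {x, y}).fixingSubgroup := by
      apply aux_fixes_adjoin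
      rintro s (rfl | rfl)
      exacts [hx, hy]
    rw [hK] at hmem
    apply hσ1
    apply AlgEquiv.ext
    intro k
    exact (IntermediateField.mem_fixingSubgroup_iff _ σ).mp hmem k trivial
  have hyne : σ y ≠ y := fun hy => hxne (hkey.mpr hy)
  -- degree argument
  have hnd : ∀ t : K, σ t ≠ t →
      ¬ p ∣ Module.finrank (IntermediateField.adjoin F {t}) K := by
    intro t ht hdvd
    apply ht
    have hmem : σ ∈ (IntermediateField.adjoin F {t}).fixingSubgroup := by
      apply aux_cyclic_mem
      rw [hord, IsGalois.card_fixingSubgroup_eq_finrank]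
      exact hdvd
    exact (IntermediateField.mem_fixingSubgroup_iff _ σ).mp hmem t
      (IntermediateField.mem_adjoin_simple_self F t)
  set N := Module.finrank F K with hNdef
  set a' := Module.finrank (IntermediateField.adjoin F {x}) K with ha'def
  set b' := Module.finrank (IntermediateField.adjoin F {y}) K with hb'def
  have hNa : a * a' = N := by
    rw [← ha, ha'def, hNdef]; exact Module.finrank_mul_finrank F _ K
  have hNb : b * b' = N := by
    rw [← hb, hb'def, hNdef]; exact Module.finrank_mul_finrank F _ K
  have hpa' : ¬ p ∣ a' := hnd x hxne
  have hpb' : ¬ p ∣ b' := hnd y hyne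
  have hpN : p ∣ N := by
    have h1 : orderOf σ ∣ Nat.card (K ≃ₐ[F] K) := orderOf_dvd_natCard σ
    rw [hord, IsGalois.card_aut_eq_finrank] at h1
    exact h1
  have hN0 : N ≠ 0 := Module.finrank_pos.ne'
  have ha0 : a ≠ 0 := fun h => hN0 (by rw [← hNa, h, zero_mul])
  have hb0 : b ≠ 0 := fun h => hN0 (by rw [← hNb, h, zero_mul])
  have ha'0 : a' ≠ 0 := fun h => hN0 (by rw [← hNa, h, mul_zero])
  have hb'0 : b' ≠ 0 := fun h => hN0 (by rw [← hNb, h, mul_zero])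
  have hd0 : d ≠ 0 := by rw [hd]; exact Nat.gcd_ne_zero_left ha0
  have hm0 : m ≠ 0 := fun h => ha0 (by rw [hm, h, zero_mul])
  have hn0 : n ≠ 0 := fun h => hb0 (by rw [hn, h, zero_mul])
  set e := N.factorization p with hedef
  have hfa : a.factorization p = e := by
    have h1 : (a * a').factorization p = e := by rw [hNa]
    rw [Nat.factorization_mul ha0 ha'0, Finsupp.add_apply,
      Nat.factorization_eq_zero_of_not_dvd hpa', add_zero] at h1
    exact h1
  have hfb : b.factorization p = e := by
    have h1 : (b * b').factorization p = e := by rw [hNb]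
    rw [Nat.factorization_mul hb0 hb'0, Finsupp.add_apply,
      Nat.factorization_eq_zero_of_not_dvd hpb', add_zero] at h1
    exact h1
  have he1 : 1 ≤ e := (Nat.Prime.factorization_pos_of_dvd pp hN0 hpN)
  have hpa : p ∣ a := (Nat.Prime.dvd_iff_one_le_factorization pp ha0).mpr (by omega)
  have hpb : p ∣ b := (Nat.Prime.dvd_iff_one_le_factorization pp hb0).mpr (by omega)
  have hpd : p ∣ d := hd ▸ Nat.dvd_gcd hpa hpb
  have hfd : d.factorization p = e := by
    rw [hd, Nat.factorization_gcd ha0 hb0, Finsupp.inf_apply, hfa, hfb, min_self]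
  rcases (Nat.Prime.dvd_mul pp).mp (hp p pp hpd) with hpm | hpn
  · have h1 : a.factorization p = m.factorization p + d.factorization p := by
      rw [hm, Nat.factorization_mul hm0 hd0, Finsupp.add_apply]
    have h2 : 1 ≤ m.factorization p :=
      (Nat.Prime.dvd_iff_one_le_factorization pp hm0).mp hpm
    omega
  · have h1 : b.factorization p = n.factorization p + d.factorization p := by
      rw [hn, Nat.factorization_mul hn0 hd0, Finsupp.add_apply]
    have h2 : 1 ≤ n.factorization p :=
      (Nat.Prime.dvd_iff_one_le_factorization pp hn0).mp hpn
    omega
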